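/- arXiv:2406.17182 — 2 statements merged into one kernel-verified Lean document; each statement's English description precedes it below -/
import Mathlib

section
/- (Bias of the OME-EIB estimator.) Under the OME recommendation setup, the bias of the OME-EIB estimator equals (1/|D|)·| Σ_{(u,i)∈D} (1 − p_{u,i})·ē_{u,i} + Σ_{(u,i): r*_{u,i}=1} [ (p_{u,i}·ω11 − 1)·ℓ_{u,i}(1) + p_{u,i}·ω01·ℓ_{u,i}(0) ] + Σ_{(u,i): r*_{u,i}=0} [ p_{u,i}·ω10·ℓ_{u,i}(1) + (p_{u,i}·ω00 − 1)·ℓ_{u,i}(0) ] |, where ω11 = (1−ρ01−ρ̂10)/(1−ρ̂01−ρ̂10), ω01 = (ρ01−ρ̂01)/(1−ρ̂01−ρ̂10), ω10 = (ρ10−ρ̂10)/(1−ρ̂01−ρ̂10), ω00 = (1−ρ̂01−ρ10)/(1−ρ̂01−ρ̂10). -/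
open Finset

lemma sum_pi_prod {D : Type*} [Fintype D] [DecidableEq D] (w : D → Bool → ℝ) :
    ∑ f : D → Bool, ∏ d, w d (f d) = ∏ d, ∑ b : Bool, w d b := by
  rw [Finset.prod_univ_sum]
  rw [Fintype.piFinset_univ]

lemma expect_single {D : Type*} [Fintype D] [DecidableEq D] (w : D → Bool → ℝ)
    (hw : ∀ d, w d true + w d false = 1) (d0 : D) (φ : Bool → ℝ) :
    ∑ f : D → Bool, (∏ d, w d (f d)) * φ (f d0)
      = w d0 true * φ true + w d0 false * φ false := by
  have h1 : ∀ f : D → Bool, (∏ d, w d (f d)) * φ (f d0)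
      = ∏ d, (w d (f d) * (if d = d0 then φ (f d) else 1)) := by
    intro f
    rw [Finset.prod_mul_distrib, Finset.prod_ite_eq' univ d0 (fun d => φ (f d))]
    simp
  simp only [h1]
  rw [sum_pi_prod (fun d b => w d b * (if d = d0 then φ b else 1))]
  have h2 : ∀ d, (∑ b : Bool, w d b * (if d = d0 then φ b else 1))
      = if d = d0 then (w d0 true * φ true + w d0 false * φ false) else 1 := by
    intro d; by_cases h : d = d0 <;> simp [h, Fintype.sum_bool, hw d]
  simp only [h2]
  rw [Finset.prod_ite_eq' univ d0]
  simp

lemma expect_pair {D : Type*} [Fintype D] [DecidableEq D] (wo wr : D → Bool → ℝ)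
    (hwo : ∀ d, wo d true + wo d false = 1) (hwr : ∀ d, wr d true + wr d false = 1)
    (d0 : D) (F : Bool → Bool → ℝ) :
    ∑ o : D → Bool, ∑ r : D → Bool,
      ((∏ d, wo d (o d)) * (∏ d, wr d (r d))) * F (o d0) (r d0)
    = wo d0 true * (wr d0 true * F true true + wr d0 false * F true false) +
      wo d0 false * (wr d0 true * F false true + wr d0 false * F false false) := by
  have h : ∀ o : D → Bool,
      (∑ r : D → Bool, ((∏ d, wo d (o d)) * (∏ d, wr d (r d))) * F (o d0) (r d0))
      = (∏ d, wo d (o d)) * (wr d0 true * F (o d0) true + wr d0 false * F (o d0) false) := by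
    intro o
    rw [← expect_single wr hwr d0 (fun b => F (o d0) b), Finset.mul_sum]
    congr 1; ext r; ring
  simp only [h]
  exact expect_single wo hwo d0 (fun a => wr d0 true * F a true + wr d0 false * F a false)


/-- Expectation of a functional `g` of jointly independent families of Bernoulli random
variables `o d ~ Bernoulli (p d)` (observation indicators) and `r d ~ Bernoulli (q d)`
(observed ratings), encoded as a weighted sum over all realizations. -/
noncomputable def expectOR {D : Type*} [Fintype D] [DecidableEq D] (p q : D → ℝ)
    (g : (D → Bool) → (D → Bool) → ℝ) : ℝ :=
  ∑ o : D → Bool, ∑ r : D → Bool,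
    ((∏ d, (if o d then p d else 1 - p d)) * (∏ d, (if r d then q d else 1 - q d))) * g o r

/-- **Bias of the OME-EIB estimator.** Under the OME recommendation setup,
with true ratings `rstar`, losses `l d true = ℓ_{u,i}(1)` and `l d false = ℓ_{u,i}(0)`,
true propensities `p`, imputed errors `ebar`, true error rates `ρ01, ρ10` and estimated
error rates `ρh01, ρh10`, the bias `|E[ε_OME-EIB] − P*|` of the OME-EIB estimator has
the stated explicit form. -/
theorem bias_OME_EIB {D : Type*} [Fintype D] [DecidableEq D] [Nonempty D]
    (rstar : D → Bool) (l : D → Bool → ℝ) (p ebar : D → ℝ)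
    (ρ01 ρ10 ρh01 ρh10 : ℝ)
    (hp0 : ∀ d, 0 < p d) (hp1 : ∀ d, p d ≤ 1)
    (h01 : 0 ≤ ρ01) (h10 : 0 ≤ ρ10) (hsum : ρ01 + ρ10 < 1)
    (hh01 : 0 ≤ ρh01) (hh10 : 0 ≤ ρh10) (hhsum : ρh01 + ρh10 < 1) :
    |expectOR p (fun d => if rstar d then 1 - ρ01 else ρ10)
        (fun o r => (1 / (Fintype.card D : ℝ)) * ∑ d,
          ((1 - (if o d then (1 : ℝ) else 0)) * ebar d +
            (if o d then (1 : ℝ) else 0) *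
              (if r d then ((1 - ρh10) * l d true - ρh01 * l d false) / (1 - ρh01 - ρh10)
               else ((1 - ρh01) * l d false - ρh10 * l d true) / (1 - ρh01 - ρh10)))) -
        (1 / (Fintype.card D : ℝ)) * ∑ d, l d (rstar d)| =
      (1 / (Fintype.card D : ℝ)) *
        |(∑ d, (1 - p d) * ebar d) +
          (∑ d ∈ univ.filter (fun d => rstar d = true),
            ((p d * ((1 - ρ01 - ρh10) / (1 - ρh01 - ρh10)) - 1) * l d true +
              p d * ((ρ01 - ρh01) / (1 - ρh01 - ρh10)) * l d false)) +
          (∑ d ∈ univ.filter (fun d => rstar d = false),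
            (p d * ((ρ10 - ρh10) / (1 - ρh01 - ρh10)) * l d true +
              (p d * ((1 - ρh01 - ρ10) / (1 - ρh01 - ρh10)) - 1) * l d false))| := by
  have hden : (0:ℝ) < 1 - ρh01 - ρh10 := by linarith
  have hne : (1:ℝ) - ρh01 - ρh10 ≠ 0 := ne_of_gt hden
  set n : ℝ := (Fintype.card D : ℝ) with hn
  have hnpos : (0:ℝ) < n := by
    rw [hn]; exact_mod_cast Fintype.card_pos
  set q : D → ℝ := fun d => if rstar d then 1 - ρ01 else ρ10 with hq
  set L1 : D → ℝ := fun d => ((1 - ρh10) * l d true - ρh01 * l d false) / (1 - ρh01 - ρh10) with hL1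
  set L0 : D → ℝ := fun d => ((1 - ρh01) * l d false - ρh10 * l d true) / (1 - ρh01 - ρh10) with hL0
  set G : D → Bool → Bool → ℝ := fun d a b =>
    (1 - (if a then (1:ℝ) else 0)) * ebar d +
      (if a then (1:ℝ) else 0) * (if b then L1 d else L0 d) with hG
  have hwo : ∀ d, (if (true : Bool) then p d else 1 - p d) + (if (false : Bool) then p d else 1 - p d) = 1 := by
    intro d; simp
  have hwr : ∀ d, (if (true : Bool) then q d else 1 - q d) + (if (false : Bool) then q d else 1 - q d) = 1 := by
    intro d; simp
  have key : expectOR p q (fun o r => (1 / n) * ∑ d, G d (o d) (r d))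
      = (1 / n) * ∑ d, ((1 - p d) * ebar d + p d * (q d * L1 d + (1 - q d) * L0 d)) := by
    unfold expectOR
    calc ∑ o : D → Bool, ∑ r : D → Bool,
          ((∏ d, (if o d then p d else 1 - p d)) * (∏ d, (if r d then q d else 1 - q d))) *
            ((1 / n) * ∑ d, G d (o d) (r d))
        = (1/n) * ∑ o : D → Bool, ∑ r : D → Bool, ∑ d,
            ((∏ d, (if o d then p d else 1 - p d)) * (∏ d, (if r d then q d else 1 - q d))) *
              G d (o d) (r d) := by
          rw [Finset.mul_sum]
          refine Finset.sum_congr rfl fun o _ => ?_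
          rw [Finset.mul_sum]
          refine Finset.sum_congr rfl fun r _ => ?_
          simp only [Finset.mul_sum]
          exact Finset.sum_congr rfl fun d _ => by ring
      _ = (1/n) * ∑ d, ∑ o : D → Bool, ∑ r : D → Bool,
            ((∏ d, (if o d then p d else 1 - p d)) * (∏ d, (if r d then q d else 1 - q d))) *
              G d (o d) (r d) := by
          congr 1
          rw [show (∑ o : D → Bool, ∑ r : D → Bool, ∑ d,
            ((∏ d, (if o d then p d else 1 - p d)) * (∏ d, (if r d then q d else 1 - q d))) *
              G d (o d) (r d)) = ∑ o : D → Bool, ∑ d, ∑ r : D → Bool,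
            ((∏ d, (if o d then p d else 1 - p d)) * (∏ d, (if r d then q d else 1 - q d))) *
              G d (o d) (r d) from Finset.sum_congr rfl fun o _ => Finset.sum_comm]
          exact Finset.sum_comm
      _ = (1/n) * ∑ d, ((1 - p d) * ebar d + p d * (q d * L1 d + (1 - q d) * L0 d)) := by
          congr 1
          refine Finset.sum_congr rfl fun d _ => ?_
          have := expect_pair (fun d b => if b then p d else 1 - p d)
            (fun d b => if b then q d else 1 - q d) hwo hwr d (G d)
          simp only [] at this
          rw [this]
          simp [hG]
          ring
  rw [key]
  rw [← mul_sub, abs_mul, abs_of_pos (by positivity : (0:ℝ) < 1/n)]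
  congr 1
  rw [← Finset.sum_sub_distrib]
  have split : ∑ d, ((1 - p d) * ebar d + p d * (q d * L1 d + (1 - q d) * L0 d) - l d (rstar d))
      = (∑ d, (1 - p d) * ebar d) +
        ∑ d, (p d * (q d * L1 d + (1 - q d) * L0 d) - l d (rstar d)) := by
    rw [← Finset.sum_add_distrib]
    refine Finset.sum_congr rfl fun d _ => by ring
  rw [split]
  congr 1
  rw [add_assoc]
  congr 1
  rw [← Finset.sum_filter_add_sum_filter_not univ (fun d => rstar d = true)]
  congr 1
  · refine Finset.sum_congr rfl fun d hd => ?_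
    simp only [Finset.mem_filter] at hd
    simp only [hq, hL1, hL0, hd.2, if_pos]
    field_simp
    ring
  · rw [show (Finset.filter (fun d => ¬ rstar d = true) univ) = (Finset.filter (fun d => rstar d = false) univ) from by simp [Bool.not_eq_true]]
    refine Finset.sum_congr rfl fun d hd => ?_
    simp only [Finset.mem_filter] at hd
    simp only [hq, hL1, hL0, hd.2]
    simp only [Bool.false_eq_true, if_false]
    field_simp
    ring
end

section
/- (Double robustness of the DR estimator, without OME.) Under the MNAR recommendation setup, suppose that for every (u,i) ∈ D either the imputed error is accurate, ê_{u,i} = e_{u,i}, or the learned propensity is accurate, p̂_{u,i} = p_{u,i}. Then the DR estimator ε_DR = (1/|D|)·Σ_{(u,i)∈D} [ ê_{u,i} + (o_{u,i}/p̂_{u,i})·(e_{u,i} − ê_{u,i}) ] is unbiased for the prediction inaccuracy: E[ε_DR] = P. -/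
open Finset

/-- Expectation of a functional `g` of an independent family of Bernoulli random
variables `o d ~ Bernoulli (p d)` (observation indicators), encoded as a weighted sum
over all realizations. -/
noncomputable def expectO {D : Type*} [Fintype D] [DecidableEq D] (p : D → ℝ)
    (g : (D → Bool) → ℝ) : ℝ :=
  ∑ o : D → Bool, (∏ d, (if o d then p d else 1 - p d)) * g o

lemma expect_coord {D : Type*} [Fintype D] [DecidableEq D] (p : D → ℝ) (d : D)
    (h : Bool → ℝ) :
    ∑ o : D → Bool, (∏ d', (if o d' then p d' else 1 - p d')) * h (o d) =
      p d * h true + (1 - p d) * h false := by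
  have key : ∑ o : D → Bool,
      ∏ d', ((if o d' then p d' else 1 - p d') * (if d' = d then h (o d') else 1)) =
      ∏ d', ∑ b : Bool, ((if b then p d' else 1 - p d') * (if d' = d then h b else 1)) := by
    exact (Fintype.prod_sum
      (fun d' b => (if b then p d' else 1 - p d') * (if d' = d then h b else 1))).symm
  have lhs_eq : ∀ o : D → Bool,
      (∏ d', (if o d' then p d' else 1 - p d')) * h (o d) =
      ∏ d', ((if o d' then p d' else 1 - p d') * (if d' = d then h (o d') else 1)) := by
    intro o
    rw [Finset.prod_mul_distrib]
    congr 1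
    rw [Finset.prod_ite_eq' Finset.univ d (fun d' => h (o d'))]
    simp
  have rhs_eq :
      ∏ d', (∑ b : Bool, ((if b then p d' else 1 - p d') * (if d' = d then h b else 1))) =
      p d * h true + (1 - p d) * h false := by
    rw [Finset.prod_eq_single d]
    · simp
    · intro b _ hb
      simp [hb, Fintype.sum_bool]
    · simp
  calc ∑ o : D → Bool, (∏ d', (if o d' then p d' else 1 - p d')) * h (o d)
      = ∑ o : D → Bool, ∏ d', ((if o d' then p d' else 1 - p d') * (if d' = d then h (o d') else 1)) :=
        Finset.sum_congr rfl fun o _ => lhs_eq o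
    _ = _ := key.trans rhs_eq

/-- **Double robustness of the DR estimator, without OME.** Under the
MNAR recommendation setup with prediction errors `e`, imputed errors `ehat`, true
propensities `p ∈ (0,1]` and learned propensities `phat > 0`, if for every `d` either
`ehat d = e d` or `phat d = p d`, then the DR estimator is unbiased: `E[ε_DR] = P`. -/
theorem double_robustness_DR {D : Type*} [Fintype D] [DecidableEq D] [Nonempty D]
    (e ehat p phat : D → ℝ)
    (hp0 : ∀ d, 0 < p d) (hp1 : ∀ d, p d ≤ 1) (hphat : ∀ d, 0 < phat d)
    (hDR : ∀ d, ehat d = e d ∨ phat d = p d) :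
    expectO p (fun o => (1 / (Fintype.card D : ℝ)) * ∑ d,
        (ehat d + ((if o d then (1 : ℝ) else 0) / phat d) * (e d - ehat d))) =
      (1 / (Fintype.card D : ℝ)) * ∑ d, e d := by
  unfold expectO
  have : ∀ o : D → Bool, (∏ d, (if o d then p d else 1 - p d)) *
      ((1 / (Fintype.card D : ℝ)) * ∑ d,
        (ehat d + ((if o d then (1 : ℝ) else 0) / phat d) * (e d - ehat d))) =
      (1 / (Fintype.card D : ℝ)) * ∑ d, (∏ d', (if o d' then p d' else 1 - p d')) *
        (ehat d + ((if o d then (1 : ℝ) else 0) / phat d) * (e d - ehat d)) := by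
    intro o; rw [mul_left_comm]; congr 1; rw [Finset.mul_sum]
  simp_rw [this]
  rw [← Finset.mul_sum, Finset.sum_comm]
  congr 1
  rw [Finset.sum_congr rfl (fun d _ => expect_coord p d
    (fun b => ehat d + ((if b then (1:ℝ) else 0) / phat d) * (e d - ehat d)))]
  apply Finset.sum_congr rfl
  intro d _
  rcases hDR d with h | h
  · simp [h]; ring
  · have hpne : p d ≠ 0 := ne_of_gt (hp0 d)
    rw [h]
    field_simp
    simp only [ite_true, Bool.false_eq_true, ite_false]
    ring
end
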